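/- Let Q ∈ ℝ^{p×p} be symmetric positive definite, 𝐉 ⊂ {1,…,p}, and consider the local noiseless problem min_Δ ½ΔᵀQΔ + Δ_𝐉ᵀ sign(𝐰_𝐉) + ‖Δ_{𝐉ᶜ}‖₁. The unique minimizer Δ satisfies Δ_{𝐉ᶜ} = 0 if and only if ‖Q_{𝐉ᶜ,𝐉} Q_{𝐉,𝐉}⁻¹ sign(𝐰_𝐉)‖_∞ ≤ 1. -/

import Mathlib

open Matrix

section Helpers

variable {p : ℕ} {w : Fin p → ℝ}

/-- Extension of a vector on the support subtype by zero. -/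
noncomputable def zext (w : Fin p → ℝ) (x : {i : Fin p // w i ≠ 0} → ℝ) : Fin p → ℝ :=
  fun j => if h : w j = 0 then 0 else x ⟨j, h⟩

lemma zext_zero {x : {i : Fin p // w i ≠ 0} → ℝ} {j : Fin p} (hj : w j = 0) : zext w x j = 0 := by
  simp [zext, hj]

lemma zext_ne {x : {i : Fin p // w i ≠ 0} → ℝ} (i : {i : Fin p // w i ≠ 0}) :
    zext w x i.val = x i := by
  simp [zext, i.2]

lemma sum_eq_subtype (φ : Fin p → ℝ) (h : ∀ j, w j = 0 → φ j = 0) :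
    ∑ j, φ j = ∑ i : {i : Fin p // w i ≠ 0}, φ i.val := by
  rw [show (∑ j, φ j) = ∑ j ∈ Finset.univ.filter (fun i => w i ≠ 0), φ j from
    (Finset.sum_subset (Finset.filter_subset _ _)
      (fun x _ hx => h x (by simpa using (Finset.mem_filter.not.mp hx)))).symm]
  exact Finset.sum_subtype _ (by simp) φ

lemma subPD (Q : Matrix (Fin p) (Fin p) ℝ) (hQ : Q.PosDef) :
    (Q.submatrix (Subtype.val : {i : Fin p // w i ≠ 0} → Fin p) Subtype.val).PosDef := by
  refine Matrix.PosDef.of_dotProduct_mulVec_pos ?_ ?_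
  · exact hQ.1.submatrix _
  · intro x hx
    have hx' : zext w x ≠ 0 := by
      intro h0
      apply hx
      funext i
      have := congrFun h0 i.val
      simpa [zext_ne] using this
    have := hQ.dotProduct_mulVec_pos hx'
    convert this using 1
    simp only [star_trivial, dotProduct, mulVec, submatrix_apply]
    rw [sum_eq_subtype (w := w) (fun j => zext w x j * ∑ k, Q j k * zext w x k)
      (fun j hj => by simp [zext_zero (x := x) hj])]
    apply Finset.sum_congr rfl
    intro i _
    rw [zext_ne]
    congr 1
    rw [sum_eq_subtype (w := w) (fun l => Q i.val l * zext w x l)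
      (fun j hj => by simp [zext_zero (x := x) hj])]
    simp [zext_ne]

lemma dot_symm (Q : Matrix (Fin p) (Fin p) ℝ) (hQ : Q.IsHermitian) (x y : Fin p → ℝ) :
    x ⬝ᵥ Q *ᵥ y = y ⬝ᵥ Q *ᵥ x := by
  rw [dotProduct_mulVec, ← mulVec_transpose,
    show Qᵀ = Q from by simpa using congrArg (fun M => M) hQ]
  exact dotProduct_comm _ _

lemma quad_expand (Q : Matrix (Fin p) (Fin p) ℝ) (hQ : Q.IsHermitian) (x d : Fin p → ℝ) :
    (x + d) ⬝ᵥ Q *ᵥ (x + d) = x ⬝ᵥ Q *ᵥ x + 2 * (d ⬝ᵥ Q *ᵥ x) + d ⬝ᵥ Q *ᵥ d := by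
  rw [mulVec_add, dotProduct_add, add_dotProduct, add_dotProduct, dot_symm Q hQ x d]
  ring

lemma single_pert (Q : Matrix (Fin p) (Fin p) ℝ) (hQ : Q.IsHermitian)
    (Δ : Fin p → ℝ) (i : Fin p) (t : ℝ) :
    ((Δ + Pi.single i t : Fin p → ℝ)) ⬝ᵥ Q *ᵥ ((Δ + Pi.single i t : Fin p → ℝ))
      = Δ ⬝ᵥ Q *ᵥ Δ + 2 * (t * (Q *ᵥ Δ) i) + t * (Q i i * t) := by
  rw [quad_expand Q hQ]
  congr 1
  · congr 1
    rw [single_dotProduct]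
  · rw [mulVec_single, single_dotProduct]; simp

lemma sum_pert (w Δ : Fin p → ℝ) (i : Fin p) (t : ℝ) :
    (∑ j, if w j = 0 then |((Δ + Pi.single i t : Fin p → ℝ)) j|
        else ((Δ + Pi.single i t : Fin p → ℝ)) j * Real.sign (w j))
      = (∑ j, if w j = 0 then |Δ j| else Δ j * Real.sign (w j))
        - (if w i = 0 then |Δ i| else Δ i * Real.sign (w i))
        + (if w i = 0 then |Δ i + t| else (Δ i + t) * Real.sign (w i)) := by
  rw [← Finset.add_sum_erase _ _ (Finset.mem_univ i),
      ← Finset.add_sum_erase _ (fun j => if w j = 0 then |Δ j| else Δ j * Real.sign (w j))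
        (Finset.mem_univ i)]
  have h1 : ∀ j ∈ Finset.univ.erase i,
      (if w j = 0 then |((Δ + Pi.single i t : Fin p → ℝ)) j|
          else ((Δ + Pi.single i t : Fin p → ℝ)) j * Real.sign (w j))
        = (if w j = 0 then |Δ j| else Δ j * Real.sign (w j)) := by
    intro j hj
    have : ((Δ + Pi.single i t : Fin p → ℝ)) j = Δ j := by
      simp [Pi.single_apply, Finset.mem_erase.mp hj |>.1]
    rw [this]
  rw [Finset.sum_congr rfl h1]
  have : ((Δ + Pi.single i t : Fin p → ℝ)) i = Δ i + t := by simp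
  rw [this]
  ring

lemma lin_zero {a b : ℝ} (hb : 0 < b) (h : ∀ t : ℝ, 0 ≤ t * a + t * (b * t) / 2) : a = 0 := by
  by_contra hne
  have h1 := h (-a / b)
  have h4 : 0 < a ^ 2 := by positivity
  have h5 : -a / b * a + -a / b * (b * (-a / b)) / 2 = -(a ^ 2) / (2 * b) := by
    field_simp
    ring
  rw [h5] at h1
  rw [neg_div] at h1
  linarith [div_pos h4 (by linarith : (0:ℝ) < 2 * b)]

lemma small_pos {c b : ℝ} (hb : 0 < b) (h : ∀ ε : ℝ, 0 < ε → 0 ≤ ε * c + ε^2 * b / 2 + ε) :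
    -1 ≤ c := by
  by_contra hlt
  push_neg at hlt
  set ε := (-1 - c) / b with hε
  have hεpos : 0 < ε := div_pos (by linarith) hb
  have := h ε hεpos
  have hbe : ε * b = -1 - c := by rw [hε, div_mul_cancel₀ _ hb.ne']
  nlinarith

end Helpers

/-- The minimizer `Δ` of the local noiseless problem
`½ΔᵀQΔ + Δ_𝐉ᵀ sign(𝐰_𝐉) + ‖Δ_{𝐉ᶜ}‖₁` satisfies `Δ_{𝐉ᶜ} = 0` if and only if the
Lasso consistency condition `‖Q_{𝐉ᶜ,𝐉} Q_{𝐉,𝐉}⁻¹ sign(𝐰_𝐉)‖_∞ ≤ 1` holds. -/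
theorem stmt_15 {p : ℕ} (Q : Matrix (Fin p) (Fin p) ℝ) (hQ : Q.PosDef)
    (w : Fin p → ℝ) (Δ : Fin p → ℝ)
    (hmin : ∀ v : Fin p → ℝ,
      (1 / 2) * (Δ ⬝ᵥ Q.mulVec Δ)
          + (∑ j, if w j = 0 then |Δ j| else Δ j * Real.sign (w j)) ≤
        (1 / 2) * (v ⬝ᵥ Q.mulVec v)
          + (∑ j, if w j = 0 then |v j| else v j * Real.sign (w j))) :
    (∀ j, w j = 0 → Δ j = 0) ↔
      (∀ j, w j = 0 →
        |∑ i : {i : Fin p // w i ≠ 0},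
            Q j i.val *
              ((Q.submatrix (·.val) (·.val) :
                  Matrix {i : Fin p // w i ≠ 0} {i : Fin p // w i ≠ 0} ℝ)⁻¹.mulVec
                (fun i : {i : Fin p // w i ≠ 0} => Real.sign (w i.val))) i| ≤ 1) := by
  set QJ : Matrix {i : Fin p // w i ≠ 0} {i : Fin p // w i ≠ 0} ℝ :=
    Q.submatrix (·.val) (·.val) with hQJdef
  set s : {i : Fin p // w i ≠ 0} → ℝ := fun i => Real.sign (w i.val) with hsdef
  set u : {i : Fin p // w i ≠ 0} → ℝ := QJ⁻¹.mulVec s with hudef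
  have hQJ : QJ.PosDef := subPD Q hQ
  have hdet : IsUnit QJ.det := isUnit_iff_ne_zero.mpr hQJ.det_pos.ne'
  have hdiag : ∀ i, 0 < Q i i := fun i => by
    have := hQ.dotProduct_mulVec_pos (x := Pi.single i 1) (by
      intro h; have := congrFun h i; simp at this)
    simpa [single_dotProduct, mulVec_single] using this
  -- perturbation inequality
  have hpert : ∀ (i : Fin p) (t : ℝ),
      0 ≤ t * (Q *ᵥ Δ) i + t * (Q i i * t) / 2
        + ((if w i = 0 then |Δ i + t| else (Δ i + t) * Real.sign (w i))
            - (if w i = 0 then |Δ i| else Δ i * Real.sign (w i))) := by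
    intro i t
    have h := hmin (Δ + Pi.single i t)
    rw [show Q.mulVec = fun v => Q *ᵥ v from rfl] at h
    rw [single_pert Q hQ.1 Δ i t, sum_pert w Δ i t] at h
    linarith
  -- optimality on the support
  have hsupp : ∀ i : Fin p, w i ≠ 0 → (Q *ᵥ Δ) i + Real.sign (w i) = 0 := by
    intro i hi
    have hb := hdiag i
    have key : ∀ t : ℝ, 0 ≤ t * ((Q *ᵥ Δ) i + Real.sign (w i)) + t * (Q i i * t) / 2 := by
      intro t
      have h := hpert i t
      rw [if_neg hi, if_neg hi] at h
      nlinarith [h]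
    exact lin_zero hb key
  -- subgradient bound off the support
  have hoff : ∀ j : Fin p, w j = 0 → Δ j = 0 → |(Q *ᵥ Δ) j| ≤ 1 := by
    intro j hj hΔj
    set c := (Q *ᵥ Δ) j with hc
    have hb := hdiag j
    have key : ∀ t : ℝ, 0 ≤ t * c + t * (Q j j * t) / 2 + |t| := by
      intro t
      have := hpert j t
      rw [if_pos hj, if_pos hj, hΔj] at this
      simpa using this
    have h1 : -1 ≤ c := by
      apply small_pos hb
      intro ε hε
      have := key ε
      rw [abs_of_pos hε] at this
      nlinarith
    have h2 : c ≤ 1 := by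
      have : -1 ≤ -c := by
        apply small_pos hb
        intro ε hε
        have := key (-ε)
        rw [abs_of_neg (by linarith : -ε < 0)] at this
        nlinarith
      linarith
    exact abs_le.mpr ⟨h1, h2⟩
  constructor
  · -- forward direction
    intro hz j hj
    have hΔJ : QJ *ᵥ (fun i : {i : Fin p // w i ≠ 0} => Δ i.val)
        = fun i => -Real.sign (w i.val) := by
      funext i
      have : (QJ *ᵥ (fun i : {i : Fin p // w i ≠ 0} => Δ i.val)) i = (Q *ᵥ Δ) i.val := by
        simp only [mulVec, dotProduct, hQJdef, submatrix_apply]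
        rw [sum_eq_subtype (w := w) (fun k => Q i.val k * Δ k)
          (fun k hk => by show Q i.val k * Δ k = 0; rw [hz k hk]; ring)]
      rw [this]
      have := hsupp i.val i.2
      linarith
    have hΔu : (fun i : {i : Fin p // w i ≠ 0} => Δ i.val) = fun i => -u i := by
      have h1 : QJ⁻¹ *ᵥ (QJ *ᵥ (fun i : {i : Fin p // w i ≠ 0} => Δ i.val))
          = (fun i : {i : Fin p // w i ≠ 0} => Δ i.val) := by
        rw [mulVec_mulVec, Matrix.nonsing_inv_mul _ hdet, one_mulVec]
      rw [← h1, hΔJ]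
      funext i
      rw [hudef]
      have : (fun i : {i : Fin p // w i ≠ 0} => -Real.sign (w i.val)) = -s := by
        funext i; simp [hsdef]
      rw [this, Matrix.mulVec_neg]
      simp
    have hsum : ∑ i : {i : Fin p // w i ≠ 0}, Q j i.val * u i = -(Q *ᵥ Δ) j := by
      have h2 : (Q *ᵥ Δ) j = ∑ i : {i : Fin p // w i ≠ 0}, Q j i.val * Δ i.val := by
        simp only [mulVec, dotProduct]
        exact sum_eq_subtype (w := w) (fun k => Q j k * Δ k)
          (fun k hk => by show Q j k * Δ k = 0; rw [hz k hk]; ring)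
      rw [h2, ← Finset.sum_neg_distrib]
      apply Finset.sum_congr rfl
      intro i _
      have := congrFun hΔu i
      rw [this]
      ring
    rw [hsum, abs_neg]
    exact hoff j hj (hz j hj)
  · -- backward direction
    intro hc
    set Δ' : Fin p → ℝ := zext w (fun i => -u i) with hΔ'def
    have hQΔ' : ∀ j, (Q *ᵥ Δ') j = -(∑ i : {i : Fin p // w i ≠ 0}, Q j i.val * u i) := by
      intro j
      simp only [mulVec, dotProduct]
      rw [sum_eq_subtype (w := w) (fun k => Q j k * Δ' k)
        (fun k hk => by show Q j k * Δ' k = 0; rw [hΔ'def]; rw [zext_zero hk]; ring)]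
      rw [← Finset.sum_neg_distrib]
      apply Finset.sum_congr rfl
      intro i _
      show Q j i.val * Δ' i.val = -(Q j i.val * u i)
      rw [hΔ'def, zext_ne]
      ring
    have hQΔ'supp : ∀ i : {i : Fin p // w i ≠ 0}, (Q *ᵥ Δ') i.val = -Real.sign (w i.val) := by
      intro i
      rw [hQΔ' i.val]
      have : (∑ k : {i : Fin p // w i ≠ 0}, Q i.val k.val * u k) = (QJ *ᵥ u) i := by
        simp [mulVec, dotProduct, hQJdef]
      rw [this, hudef, mulVec_mulVec, Matrix.mul_nonsing_inv _ hdet, one_mulVec]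
  -- (Q *ᵥ Δ') off-support bound
    have hQΔ'off : ∀ j, w j = 0 → |(Q *ᵥ Δ') j| ≤ 1 := by
      intro j hj
      rw [hQΔ' j, abs_neg]
      exact hc j hj
    -- Δ' is a strong minimizer
    have hstrong : ∀ v : Fin p → ℝ,
        (1 / 2) * (Δ' ⬝ᵥ Q *ᵥ Δ')
            + (∑ j, if w j = 0 then |Δ' j| else Δ' j * Real.sign (w j))
            + (1 / 2) * ((v - Δ') ⬝ᵥ Q *ᵥ (v - Δ')) ≤
          (1 / 2) * (v ⬝ᵥ Q *ᵥ v)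
            + (∑ j, if w j = 0 then |v j| else v j * Real.sign (w j)) := by
      intro v
      have hv : v = Δ' + (v - Δ') := by ring
      have hexp : v ⬝ᵥ Q *ᵥ v
          = Δ' ⬝ᵥ Q *ᵥ Δ' + 2 * ((v - Δ') ⬝ᵥ Q *ᵥ Δ') + (v - Δ') ⬝ᵥ Q *ᵥ (v - Δ') := by
        conv_lhs => rw [hv]
        exact quad_expand Q hQ.1 Δ' (v - Δ')
      rw [hexp]
      have key : 0 ≤ (v - Δ') ⬝ᵥ Q *ᵥ Δ'
          + ((∑ j, if w j = 0 then |v j| else v j * Real.sign (w j))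
            - (∑ j, if w j = 0 then |Δ' j| else Δ' j * Real.sign (w j))) := by
        have hterm : ∀ j, 0 ≤ (v j - Δ' j) * (Q *ᵥ Δ') j
            + ((if w j = 0 then |v j| else v j * Real.sign (w j))
              - (if w j = 0 then |Δ' j| else Δ' j * Real.sign (w j))) := by
          intro j
          by_cases hj : w j = 0
          · rw [if_pos hj, if_pos hj, hΔ'def, zext_zero hj]
            have h1 := hQΔ'off j hj
            have h2 : -(|v j|) ≤ v j * (Q *ᵥ Δ') j := by
              have := abs_mul (v j) ((Q *ᵥ Δ') j)
              have h3 : |v j * (Q *ᵥ Δ') j| ≤ |v j| := by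
                rw [abs_mul]
                calc |v j| * |(Q *ᵥ Δ') j| ≤ |v j| * 1 :=
                  mul_le_mul_of_nonneg_left h1 (abs_nonneg _)
                _ = |v j| := mul_one _
              linarith [neg_abs_le (v j * (Q *ᵥ Δ') j), h3]
            simp only [abs_zero]
            linarith
          · rw [if_neg hj, if_neg hj]
            have := hQΔ'supp ⟨j, hj⟩
            simp only at this
            rw [this]
            ring_nf
            nlinarith [le_refl (0:ℝ)]
        have hsum : (v - Δ') ⬝ᵥ Q *ᵥ Δ' = ∑ j, (v j - Δ' j) * (Q *ᵥ Δ') j := by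
          simp [dotProduct]
        rw [hsum, ← Finset.sum_sub_distrib, ← Finset.sum_add_distrib]
        exact Finset.sum_nonneg (fun j _ => hterm j)
      linarith
    -- compare Δ with Δ'
    have h1 := hmin Δ'
    have h2 := hstrong Δ
    rw [show Q.mulVec = fun v => Q *ᵥ v from rfl] at h1
    have hee : (Δ - Δ') ⬝ᵥ Q *ᵥ (Δ - Δ') ≤ 0 := by linarith
    have heq : Δ - Δ' = 0 := by
      by_contra hne
      exact absurd hee (not_le.mpr (by simpa using hQ.dotProduct_mulVec_pos hne))
    intro j hj
    have : Δ j = Δ' j := by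
      have := congrFun heq j
      simp only [Pi.sub_apply, Pi.zero_apply] at this
      linarith
    rw [this, hΔ'def, zext_zero hj]
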